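/- arXiv:2310.02819 — 3 statements merged into one kernel-verified Lean document; each statement's English description precedes it below -/
import Mathlib

section
/- Let n ≥ 2 and i ∈ [n-1]. The affine dimension of F_i^+ := conv{v_J : J ⊆ [n-1], i ∈ J} equals n−2, and the affine dimension of F_i^- := conv{v_J : J ⊆ [n-1], i ∉ J} equals n−2; that is, the vector span of the differences of points of each of these convex hulls has dimension n−2 over ℝ. -/
open Matrix

attribute [local instance] Classical.propDecidable

noncomputable section

namespace PetersonPaper

/-- The natural number `c` (0-based; encoding the 1-based element `c+1`) belongs to
`J ⊆ [n-1]`. -/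
def memJ (n : ℕ) (J : Set (Fin (n-1))) (c : ℕ) : Prop :=
  ∃ h : c < n - 1, (⟨c, h⟩ : Fin (n-1)) ∈ J

/-- The (0-based) first element of the maximal interval of consecutive integers of
`J` containing `i ∈ J`. -/
def compStart (n : ℕ) (J : Set (Fin (n-1))) (i : Fin (n-1)) : ℕ :=
  sInf {a : ℕ | a ≤ i.1 ∧ ∀ c : ℕ, a ≤ c → c ≤ i.1 → memJ n J c}

/-- The (0-based) last element of the maximal interval of consecutive integers of
`J` containing `i ∈ J`. -/
def compEnd (n : ℕ) (J : Set (Fin (n-1))) (i : Fin (n-1)) : ℕ :=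
  sSup {b : ℕ | b < n - 1 ∧ i.1 ≤ b ∧ ∀ c : ℕ, i.1 ≤ c → c ≤ b → memJ n J c}

/-- The vertex `v_J ∈ ℝ^{n-1}`: its `i`-th coordinate is `(i+1-a)(b+1-i)` (1-based)
if `i ∈ J` with `[a,b]` the maximal interval of `J` containing `i`, and `0`
otherwise. -/
def vJ (n : ℕ) (J : Set (Fin (n-1))) : Fin (n-1) → ℝ :=
  fun i => if i ∈ J then
    (((i.1 + 1 - compStart n J i) * (compEnd n J i + 1 - i.1) : ℕ) : ℝ) else 0

/-- The standard inner product on `ℝ^{n-1}`. -/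
def dotR (n : ℕ) (a b : Fin (n-1) → ℝ) : ℝ := ∑ i, a i * b i

/-- The standard basis vector `e_i` of `ℝ^{n-1}`. -/
def stdE (n : ℕ) (i : Fin (n-1)) : Fin (n-1) → ℝ := fun j => if j = i then 1 else 0

/-- `-α^∨_i = e_{i-1} - 2 e_i + e_{i+1}` with the convention `e_0 = e_n = 0`
(1-based; `i : Fin (n-1)` encodes `i.1+1`). -/
def negAlphaV (n : ℕ) (i : Fin (n-1)) : Fin (n-1) → ℝ :=
  fun j => (if j.1 + 1 = i.1 then 1 else 0) - 2 * (if j = i then 1 else 0)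
    + (if j.1 = i.1 + 1 then 1 else 0)

/-- The face `F_i^+ = conv{v_J : i ∈ J}`. -/
def Fplus (n : ℕ) (i : Fin (n-1)) : Set (Fin (n-1) → ℝ) :=
  convexHull ℝ { v | ∃ J : Set (Fin (n-1)), i ∈ J ∧ v = vJ n J }

/-- The face `F_i^- = conv{v_J : i ∉ J}`. -/
def Fminus (n : ℕ) (i : Fin (n-1)) : Set (Fin (n-1) → ℝ) :=
  convexHull ℝ { v | ∃ J : Set (Fin (n-1)), i ∉ J ∧ v = vJ n J }

/-- The polytope `P_{n-1} = conv{v_J : J ⊆ [n-1]}`. -/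
def Ppoly (n : ℕ) : Set (Fin (n-1) → ℝ) :=
  convexHull ℝ { v | ∃ J : Set (Fin (n-1)), v = vJ n J }

/-- The face `F_{K,J} = (⋂_{i ∈ K} F_i^+) ∩ (⋂_{i ∉ J} F_i^-)` of `P_{n-1}`
(intersecting with `P_{n-1}` itself, which encodes the convention
`F_{∅,[n-1]} = P_{n-1}` and is harmless otherwise, all faces being subsets of
`P_{n-1}`). -/
def FKJ (n : ℕ) (K J : Set (Fin (n-1))) : Set (Fin (n-1) → ℝ) :=
  Ppoly n ∩ (⋂ i ∈ K, Fplus n i) ∩ (⋂ i ∈ (Jᶜ : Set (Fin (n-1))), Fminus n i)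

section Aux

variable {n : ℕ}

lemma memJ_of_mem {J : Set (Fin (n-1))} {i : Fin (n-1)} (hi : i ∈ J) : memJ n J i.1 :=
  ⟨i.2, hi⟩

lemma memJ_iff_fin {J : Set (Fin (n-1))} {i : Fin (n-1)} : memJ n J i.1 ↔ i ∈ J := by
  constructor
  · rintro ⟨h, hm⟩; exact hm
  · exact memJ_of_mem

lemma compStart_eq {J : Set (Fin (n-1))} {i : Fin (n-1)} {a : ℕ}
    (ha : a ≤ i.1) (hall : ∀ c, a ≤ c → c ≤ i.1 → memJ n J c)
    (hmin : 0 < a → ¬ memJ n J (a-1)) :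
    compStart n J i = a := by
  unfold compStart
  have hmem : a ∈ {a : ℕ | a ≤ i.1 ∧ ∀ c : ℕ, a ≤ c → c ≤ i.1 → memJ n J c} := ⟨ha, hall⟩
  refine le_antisymm (Nat.sInf_le hmem) ?_
  by_contra h
  push_neg at h
  have hs := Nat.sInf_mem (⟨a, hmem⟩ :
    {a : ℕ | a ≤ i.1 ∧ ∀ c : ℕ, a ≤ c → c ≤ i.1 → memJ n J c}.Nonempty)
  exact hmin (by omega) (hs.2 (a-1) (by omega) (by omega))

lemma compEnd_eq {J : Set (Fin (n-1))} {i : Fin (n-1)} {b : ℕ}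
    (hb : b < n - 1) (hib : i.1 ≤ b) (hall : ∀ c, i.1 ≤ c → c ≤ b → memJ n J c)
    (hmax : ¬ memJ n J (b+1)) :
    compEnd n J i = b := by
  unfold compEnd
  have hmem : b ∈ {b : ℕ | b < n - 1 ∧ i.1 ≤ b ∧ ∀ c : ℕ, i.1 ≤ c → c ≤ b → memJ n J c} :=
    ⟨hb, hib, hall⟩
  have hbdd : BddAbove {b : ℕ | b < n - 1 ∧ i.1 ≤ b ∧ ∀ c : ℕ, i.1 ≤ c → c ≤ b → memJ n J c} :=
    ⟨n-1, fun x hx => le_of_lt hx.1⟩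
  refine le_antisymm (csSup_le ⟨b, hmem⟩ ?_) (le_csSup hbdd hmem)
  intro x hx
  by_contra hbx
  push_neg at hbx
  exact hmax (hx.2.2 (b+1) (by omega) (by omega))

lemma compStart_mem {J : Set (Fin (n-1))} {i : Fin (n-1)} (hi : i ∈ J) :
    compStart n J i ≤ i.1 ∧ ∀ c, compStart n J i ≤ c → c ≤ i.1 → memJ n J c := by
  unfold compStart
  have hne : {a : ℕ | a ≤ i.1 ∧ ∀ c : ℕ, a ≤ c → c ≤ i.1 → memJ n J c}.Nonempty := by
    refine ⟨i.1, le_refl _, fun c hc hc' => ?_⟩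
    have hce : c = i.1 := le_antisymm hc' hc
    subst hce; exact memJ_of_mem hi
  exact Nat.sInf_mem hne

lemma compStart_min {J : Set (Fin (n-1))} {i : Fin (n-1)} (hi : i ∈ J)
    (h0 : 0 < compStart n J i) : ¬ memJ n J (compStart n J i - 1) := by
  intro hm
  have hspec := compStart_mem hi
  have hmem : compStart n J i - 1 ∈
      {a : ℕ | a ≤ i.1 ∧ ∀ c : ℕ, a ≤ c → c ≤ i.1 → memJ n J c} := by
    refine ⟨by omega, fun c hc hc' => ?_⟩
    rcases eq_or_lt_of_le hc with h | h
    · rw [← h]; exact hm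
    · exact hspec.2 c (by omega) hc'
  have h2 : compStart n J i ≤ compStart n J i - 1 := Nat.sInf_le hmem
  omega

lemma compEnd_mem {J : Set (Fin (n-1))} {i : Fin (n-1)} (hi : i ∈ J) :
    compEnd n J i < n - 1 ∧ i.1 ≤ compEnd n J i ∧
      ∀ c, i.1 ≤ c → c ≤ compEnd n J i → memJ n J c := by
  unfold compEnd
  have hne : {b : ℕ | b < n - 1 ∧ i.1 ≤ b ∧ ∀ c : ℕ, i.1 ≤ c → c ≤ b → memJ n J c}.Nonempty := by
    refine ⟨i.1, i.2, le_refl _, fun c hc hc' => ?_⟩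
    have hce : c = i.1 := le_antisymm hc' hc
    subst hce; exact memJ_of_mem hi
  have hbdd : BddAbove {b : ℕ | b < n - 1 ∧ i.1 ≤ b ∧ ∀ c : ℕ, i.1 ≤ c → c ≤ b → memJ n J c} :=
    ⟨n-1, fun x hx => le_of_lt hx.1⟩
  exact Nat.sSup_mem hne hbdd

lemma compEnd_max {J : Set (Fin (n-1))} {i : Fin (n-1)} (hi : i ∈ J) :
    ¬ memJ n J (compEnd n J i + 1) := by
  intro hm
  have hspec := compEnd_mem hi
  obtain ⟨hlt, hmm⟩ := hm
  have hmem : compEnd n J i + 1 ∈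
      {b : ℕ | b < n - 1 ∧ i.1 ≤ b ∧ ∀ c : ℕ, i.1 ≤ c → c ≤ b → memJ n J c} := by
    refine ⟨hlt, by omega, fun c hc hc' => ?_⟩
    rcases eq_or_lt_of_le hc' with h | h
    · rw [h]; exact ⟨hlt, hmm⟩
    · exact hspec.2.2 c hc (by omega)
  have h2 : compEnd n J i + 1 ≤ compEnd n J i :=
    le_csSup (⟨n-1, fun x hx => le_of_lt hx.1⟩ : BddAbove _) hmem
  omega

lemma vJ_apply_mem {J : Set (Fin (n-1))} {i : Fin (n-1)} (hi : i ∈ J) :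
    vJ n J i = (((i.1 + 1 - compStart n J i) * (compEnd n J i + 1 - i.1) : ℕ) : ℝ) :=
  if_pos hi

lemma vJ_apply_notMem {J : Set (Fin (n-1))} {i : Fin (n-1)} (hi : i ∉ J) : vJ n J i = 0 :=
  if_neg hi

lemma vJ_pos {J : Set (Fin (n-1))} {j : Fin (n-1)} (hj : j ∈ J) : 0 < vJ n J j := by
  rw [vJ_apply_mem hj]
  have h1 := (compStart_mem hj).1
  have h2 := (compEnd_mem hj).2.1
  have : 0 < (j.1 + 1 - compStart n J j) * (compEnd n J j + 1 - j.1) :=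
    Nat.mul_pos (by omega) (by omega)
  exact_mod_cast this

lemma memJ_singleton {j : Fin (n-1)} {c : ℕ} : memJ n {j} c ↔ c = j.1 := by
  constructor
  · rintro ⟨h, hm⟩
    simpa [Fin.ext_iff] using hm
  · rintro rfl
    exact memJ_of_mem rfl

lemma vJ_singleton (j : Fin (n-1)) : vJ n {j} = fun k => if k = j then (1:ℝ) else 0 := by
  funext k
  by_cases hk : k = j
  · subst hk
    rw [vJ_apply_mem (Set.mem_singleton k), if_pos rfl]
    have hS : compStart n {k} k = k.1 :=
      compStart_eq le_rfl (fun c hc hc' => memJ_singleton.mpr (by omega))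
        (fun h0 => by rw [memJ_singleton]; omega)
    have hE : compEnd n {k} k = k.1 :=
      compEnd_eq k.2 le_rfl (fun c hc hc' => memJ_singleton.mpr (by omega))
        (by rw [memJ_singleton]; omega)
    rw [hS, hE]
    have h1 : k.1 + 1 - k.1 = 1 := by omega
    rw [h1]
    norm_num
  · rw [vJ_apply_notMem (by simpa using hk), if_neg hk]

lemma vJ_empty : vJ n ∅ = 0 := by
  funext k
  simp [vJ]

end Aux

section Aux2

variable {n : ℕ}

lemma negAlpha_dot {i : Fin (n-1)} {J : Set (Fin (n-1))} (hi : i ∈ J) :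
    ∑ j, negAlphaV n i j * vJ n J j = -2 := by
  set a := compStart n J i with ha
  set b := compEnd n J i with hb
  have hsp := compStart_mem hi
  have hep := compEnd_mem hi
  have hexp : ∀ j : Fin (n-1), negAlphaV n i j * vJ n J j =
      ((if j.1 + 1 = i.1 then vJ n J j else 0)
        - 2 * (if j = i then vJ n J j else 0))
      + (if j.1 = i.1 + 1 then vJ n J j else 0) := by
    intro j
    unfold negAlphaV
    split_ifs <;> ring
  rw [Finset.sum_congr rfl (fun j _ => hexp j), Finset.sum_add_distrib,
    Finset.sum_sub_distrib, ← Finset.mul_sum]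
  have hS2 : ∑ j : Fin (n-1), (if j = i then vJ n J j else 0) = vJ n J i := by simp
  have hS1 : ∑ j : Fin (n-1), (if j.1 + 1 = i.1 then vJ n J j else 0) =
      (((i.1 - a) * (b + 2 - i.1) : ℕ) : ℝ) := by
    rcases Nat.eq_zero_or_pos i.1 with h0 | h0
    · rw [Finset.sum_eq_zero (fun j _ => by rw [if_neg (by omega)])]
      have hz : i.1 - a = 0 := by omega
      rw [hz]; norm_num
    · set i' : Fin (n-1) := ⟨i.1 - 1, by omega⟩ with hi'
      have hv : i'.1 = i.1 - 1 := rfl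
      have hstep : ∑ j : Fin (n-1), (if j.1 + 1 = i.1 then vJ n J j else 0) = vJ n J i' := by
        rw [Finset.sum_congr rfl (fun j _ => ?_), Finset.sum_ite_eq' Finset.univ i' (vJ n J),
          if_pos (Finset.mem_univ i')]
        by_cases hj : j = i'
        · rw [if_pos hj, if_pos (by subst hj; omega)]
        · rw [if_neg hj, if_neg (fun hc => hj (Fin.ext (by omega)))]
      rw [hstep]
      by_cases hmem : i' ∈ J
      · have haux : a < i.1 := by
          by_contra hcon
          push_neg at hcon
          have hae : a = i.1 := le_antisymm hsp.1 hcon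
          have := compStart_min hi (by omega)
          rw [← ha] at this
          exact this (by rw [hae]; exact (memJ_iff_fin (i := i')).mpr hmem)
        have hS : compStart n J i' = a :=
          compStart_eq (by omega) (fun c hc hc' => hsp.2 c hc (by omega))
            (fun hpos => by rw [← ha] at *; exact compStart_min hi (by omega))
        have hE : compEnd n J i' = b :=
          compEnd_eq hep.1 (by omega)
            (fun c hc hc' => by
              rcases eq_or_lt_of_le hc with h | h
              · rw [← h]; exact (memJ_iff_fin (i := i')).mpr hmem
              · exact hep.2.2 c (by omega) hc')
            (by rw [← hb] at *; exact compEnd_max hi)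
        rw [vJ_apply_mem hmem, hS, hE]
        congr 1
        have : i.1 ≤ b := hep.2.1
        congr 1 <;> omega
      · have haz : a = i.1 := by
          by_contra hcon
          have hlt : a < i.1 := lt_of_le_of_ne hsp.1 hcon
          exact hmem ((memJ_iff_fin (i := i')).mp (hsp.2 i'.1 (by omega) (by omega)))
        rw [vJ_apply_notMem hmem]
        have hz : i.1 - a = 0 := by omega
        rw [hz]; norm_num
  have hS3 : ∑ j : Fin (n-1), (if j.1 = i.1 + 1 then vJ n J j else 0) =
      (((i.1 + 2 - a) * (b - i.1) : ℕ) : ℝ) := by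
    by_cases hbig : i.1 + 1 < n - 1
    · set i' : Fin (n-1) := ⟨i.1 + 1, hbig⟩ with hi'
      have hv : i'.1 = i.1 + 1 := rfl
      have hstep : ∑ j : Fin (n-1), (if j.1 = i.1 + 1 then vJ n J j else 0) = vJ n J i' := by
        rw [Finset.sum_congr rfl (fun j _ => ?_), Finset.sum_ite_eq' Finset.univ i' (vJ n J),
          if_pos (Finset.mem_univ i')]
        by_cases hj : j = i'
        · rw [if_pos hj, if_pos (by subst hj; omega)]
        · rw [if_neg hj, if_neg (fun hc => hj (Fin.ext (by omega)))]
      rw [hstep]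
      by_cases hmem : i' ∈ J
      · have haux : i.1 + 1 ≤ b := by
          by_contra hcon
          push_neg at hcon
          have hbe : b = i.1 := by omega
          have := compEnd_max hi
          rw [← hb] at this
          exact this (by rw [hbe]; exact (memJ_iff_fin (i := i')).mpr hmem)
        have hS : compStart n J i' = a :=
          compStart_eq (by omega)
            (fun c hc hc' => by
              rcases eq_or_lt_of_le hc' with h | h
              · rw [h]; exact (memJ_iff_fin (i := i')).mpr hmem
              · exact hsp.2 c hc (by omega))
            (fun hpos => by rw [← ha] at *; exact compStart_min hi (by omega))
        have hE : compEnd n J i' = b :=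
          compEnd_eq hep.1 (by omega) (fun c hc hc' => hep.2.2 c (by omega) hc')
            (by rw [← hb] at *; exact compEnd_max hi)
        rw [vJ_apply_mem hmem, hS, hE]
        congr 1
        have : a ≤ i.1 := hsp.1
        congr 1 <;> omega
      · have hbz : b = i.1 := by
          by_contra hcon
          have hlt : i.1 < b := lt_of_le_of_ne hep.2.1 (fun h => hcon h.symm)
          exact hmem ((memJ_iff_fin (i := i')).mp (hep.2.2 i'.1 (by omega) (by omega)))
        rw [vJ_apply_notMem hmem]
        have hz : b - i.1 = 0 := by omega
        rw [hz]; norm_num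
    · rw [Finset.sum_eq_zero (fun j _ => by rw [if_neg (by have := j.2; omega)])]
      have hbz : b - i.1 = 0 := by have := hep.1; have := hep.2.1; omega
      rw [hbz]; norm_num
  rw [hS1, hS2, hS3, vJ_apply_mem hi, ← ha, ← hb]
  obtain ⟨p, hp⟩ : ∃ p, i.1 = a + p := ⟨i.1 - a, by have := hsp.1; omega⟩
  obtain ⟨q, hq⟩ : ∃ q, b = i.1 + q := ⟨b - i.1, by have := hep.2.1; omega⟩
  have e1 : i.1 - a = p := by omega
  have e2 : b + 2 - i.1 = q + 2 := by omega
  have e3 : i.1 + 1 - a = p + 1 := by omega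
  have e4 : b + 1 - i.1 = q + 1 := by omega
  have e5 : i.1 + 2 - a = p + 2 := by omega
  have e6 : b - i.1 = q := by omega
  rw [e1, e2, e3, e4, e5, e6]
  push_cast
  ring

end Aux2

section Main

variable {n : ℕ}

def dotL (n : ℕ) (w : Fin (n-1) → ℝ) : (Fin (n-1) → ℝ) →ₗ[ℝ] ℝ where
  toFun x := ∑ j, w j * x j
  map_add' x y := by simp [mul_add, Finset.sum_add_distrib]
  map_smul' c x := by simp [Finset.mul_sum, mul_left_comm]

lemma dotL_apply (w x : Fin (n-1) → ℝ) : dotL n w x = ∑ j, w j * x j := rfl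

lemma indep_of (i : Fin (n-1)) (w : {j : Fin (n-1) // j ≠ i} → (Fin (n-1) → ℝ))
    (hw1 : ∀ j, w j j.1 ≠ 0)
    (hw2 : ∀ j k, k ≠ i → k ≠ j.1 → w j k = 0) : LinearIndependent ℝ w := by
  rw [Fintype.linearIndependent_iff]
  intro g hg j0
  have h := congrFun hg j0.1
  simp only [Finset.sum_apply, Pi.smul_apply, Pi.zero_apply, smul_eq_mul] at h
  rw [Finset.sum_eq_single j0 (fun j _ hj => by
      rw [hw2 j j0.1 j0.2 (fun he => hj (Subtype.ext he.symm)), mul_zero])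
    (fun hj => absurd (Finset.mem_univ j0) hj)] at h
  rcases mul_eq_zero.mp h with h | h
  · exact h
  · exact absurd h (hw1 j0)

lemma rank_eq (s : Set (Fin (n-1) → ℝ)) (i : Fin (n-1))
    (f : (Fin (n-1) → ℝ) →ₗ[ℝ] ℝ) (hf : Function.Surjective f)
    (hker : ∀ x ∈ s, ∀ y ∈ s, f (x - y) = 0)
    (w : {j : Fin (n-1) // j ≠ i} → (Fin (n-1) → ℝ))
    (hw : ∀ j, w j ∈ vectorSpan ℝ s)
    (hw1 : ∀ j, w j j.1 ≠ 0)
    (hw2 : ∀ j k, k ≠ i → k ≠ j.1 → w j k = 0) :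
    Module.finrank ℝ (vectorSpan ℝ s) = n - 2 := by
  have hcard : Fintype.card {j : Fin (n-1) // j ≠ i} = n - 2 := by
    have h1 : Fintype.card {j : Fin (n-1) // j ≠ i}
        = Fintype.card (Fin (n-1)) - Fintype.card {j : Fin (n-1) // j = i} :=
      Fintype.card_subtype_compl _
    rw [h1, Fintype.card_subtype_eq, Fintype.card_fin]
    omega
  have hli := indep_of i w hw1 hw2
  have hlow : n - 2 ≤ Module.finrank ℝ (vectorSpan ℝ s) := by
    have h1 : Module.finrank ℝ (Submodule.span ℝ (Set.range w)) = n - 2 := by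
      rw [finrank_span_eq_card hli, hcard]
    have h2 : Submodule.span ℝ (Set.range w) ≤ vectorSpan ℝ s :=
      Submodule.span_le.mpr (Set.range_subset_iff.mpr hw)
    calc n - 2 = _ := h1.symm
      _ ≤ _ := Submodule.finrank_mono h2
  have hup : Module.finrank ℝ (vectorSpan ℝ s) ≤ n - 2 := by
    have hle : vectorSpan ℝ s ≤ LinearMap.ker f := by
      rw [vectorSpan_def, Submodule.span_le]
      rintro v hv
      rw [Set.mem_vsub] at hv
      obtain ⟨x, hx, y, hy, rfl⟩ := hv
      rw [SetLike.mem_coe, LinearMap.mem_ker, vsub_eq_sub]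
      exact hker x hx y hy
    have hkerrk : Module.finrank ℝ (LinearMap.ker f) = n - 2 := by
      have h3 := LinearMap.finrank_range_add_finrank_ker f
      rw [LinearMap.range_eq_top.mpr hf, finrank_top, Module.finrank_self,
        Module.finrank_pi, Fintype.card_fin] at h3
      omega
    calc Module.finrank ℝ (vectorSpan ℝ s) ≤ _ := Submodule.finrank_mono hle
      _ = n - 2 := hkerrk
  omega

lemma negAlpha_at (i : Fin (n-1)) :
    dotL n (negAlphaV n i) (fun k => if k = i then (1:ℝ) else 0) = -2 := by
  rw [dotL_apply]
  have hterm : ∀ j : Fin (n-1), negAlphaV n i j * (if j = i then (1:ℝ) else 0) =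
      if j = i then (-2 : ℝ) else 0 := by
    intro j
    by_cases h : j = i
    · subst h
      unfold negAlphaV
      rw [if_pos rfl, if_pos rfl, if_neg (by omega), if_neg (by omega)]
      ring
    · rw [if_neg h, if_neg h, mul_zero]
  rw [Finset.sum_congr rfl (fun j _ => hterm j), Finset.sum_ite_eq' Finset.univ i,
    if_pos (Finset.mem_univ i)]

lemma coord_at (i : Fin (n-1)) (x : Fin (n-1) → ℝ) :
    dotL n (fun k => if k = i then (1:ℝ) else 0) x = x i := by
  rw [dotL_apply]
  have hterm : ∀ j : Fin (n-1), (if j = i then (1:ℝ) else 0) * x j =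
      if j = i then x j else 0 := by
    intro j
    by_cases h : j = i <;> simp [h]
  rw [Finset.sum_congr rfl (fun j _ => hterm j), Finset.sum_ite_eq' Finset.univ i,
    if_pos (Finset.mem_univ i)]

end Main

/-- Proposition: the faces `F_i^+` and `F_i^-` have affine dimension `n - 2`. -/
theorem facets_have_dimension (n : ℕ) (hn : 2 ≤ n) (i : Fin (n-1)) :
    Module.finrank ℝ (vectorSpan ℝ (Fplus n i)) = n - 2 ∧
    Module.finrank ℝ (vectorSpan ℝ (Fminus n i)) = n - 2 := by
  have hvs : ∀ s : Set (Fin (n-1) → ℝ),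
      vectorSpan ℝ (convexHull ℝ s) = vectorSpan ℝ s := fun s => by
    rw [← direction_affineSpan, affineSpan_convexHull, direction_affineSpan]
  constructor
  · rw [Fplus, hvs]
    refine rank_eq _ i (dotL n (negAlphaV n i)) ?_ ?_
      (fun j => vJ n {i, j.1} - vJ n {i}) ?_ ?_ ?_
    · intro x
      refine ⟨(x / (-2)) • (fun k => if k = i then (1:ℝ) else 0), ?_⟩
      rw [LinearMap.map_smul, negAlpha_at]
      simp
      ring
    · rintro x ⟨J, hiJ, rfl⟩ y ⟨J', hiJ', rfl⟩
      rw [map_sub, dotL_apply, dotL_apply, negAlpha_dot hiJ, negAlpha_dot hiJ']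
      ring
    · intro j
      show vJ n {i, j.1} - vJ n {i} ∈ _
      rw [← vsub_eq_sub]
      exact vsub_mem_vectorSpan ℝ ⟨{i, j.1}, Set.mem_insert _ _, rfl⟩
        ⟨{i}, Set.mem_singleton i, rfl⟩
    · intro j
      show (vJ n {i, j.1} - vJ n {i}) j.1 ≠ 0
      rw [Pi.sub_apply, vJ_singleton]
      simp only [if_neg j.2, sub_zero]
      exact (vJ_pos (show (j.1 : Fin (n-1)) ∈ ({i, j.1} : Set (Fin (n-1))) by simp)).ne'
    · intro j k hk1 hk2
      show (vJ n {i, j.1} - vJ n {i}) k = 0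
      rw [Pi.sub_apply, vJ_singleton]
      simp only [if_neg hk1, sub_zero]
      exact vJ_apply_notMem (by simp [hk1, hk2])
  · rw [Fminus, hvs]
    refine rank_eq _ i (dotL n (fun k => if k = i then (1:ℝ) else 0)) ?_ ?_
      (fun j => vJ n {j.1} - vJ n ∅) ?_ ?_ ?_
    · intro x
      refine ⟨x • (fun k => if k = i then (1:ℝ) else 0), ?_⟩
      rw [LinearMap.map_smul, coord_at]
      simp
    · rintro x ⟨J, hiJ, rfl⟩ y ⟨J', hiJ', rfl⟩
      rw [map_sub, coord_at, coord_at, vJ_apply_notMem hiJ, vJ_apply_notMem hiJ']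
      ring
    · intro j
      show vJ n {j.1} - vJ n ∅ ∈ _
      rw [← vsub_eq_sub]
      exact vsub_mem_vectorSpan ℝ
        ⟨{j.1}, by simp [Ne.symm j.2], rfl⟩
        ⟨∅, Set.notMem_empty i, rfl⟩
    · intro j
      show (vJ n {j.1} - vJ n ∅) j.1 ≠ 0
      rw [Pi.sub_apply, vJ_singleton, vJ_empty]
      simp
    · intro j k hk1 hk2
      show (vJ n {j.1} - vJ n ∅) k = 0
      rw [Pi.sub_apply, vJ_singleton, vJ_empty]
      simp [hk2]

end PetersonPaper
end
end

section
/- Let n ≥ 2 and let K ⊆ J ⊆ [n-1] and K' ⊆ J' ⊆ [n-1]. Then F_{K,J} ⊆ F_{K',J'} if and only if K' ⊆ K and J ⊆ J'; moreover F_{K,J} = F_{K',J'} if and only if K = K' and J = J'. -/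
open Matrix

attribute [local instance] Classical.propDecidable

noncomputable section

namespace PetersonPaper

/-! ### Auxiliary lemmas -/

section Aux

variable {n : ℕ}

lemma memJ_self {L : Set (Fin (n-1))} {i : Fin (n-1)} (hi : i ∈ L) : memJ n L i.1 :=
  ⟨i.2, hi⟩

lemma compStart_spec {L : Set (Fin (n-1))} {i : Fin (n-1)} (hi : i ∈ L) :
    compStart n L i ≤ i.1 ∧
      ∀ c : ℕ, compStart n L i ≤ c → c ≤ i.1 → memJ n L c := by
  have hne : {a : ℕ | a ≤ i.1 ∧ ∀ c : ℕ, a ≤ c → c ≤ i.1 → memJ n L c}.Nonempty :=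
    ⟨i.1, le_refl _, fun c h1 h2 => by
      have hc : c = i.1 := le_antisymm h2 h1
      subst hc; exact memJ_self hi⟩
  exact Nat.sInf_mem hne

lemma compStart_le {L : Set (Fin (n-1))} {i : Fin (n-1)} {a : ℕ}
    (h1 : a ≤ i.1) (h2 : ∀ c : ℕ, a ≤ c → c ≤ i.1 → memJ n L c) :
    compStart n L i ≤ a :=
  Nat.sInf_le ⟨h1, h2⟩

lemma compStart_boundary {L : Set (Fin (n-1))} {i : Fin (n-1)} (hi : i ∈ L)
    (h0 : compStart n L i ≠ 0) : ¬ memJ n L (compStart n L i - 1) := by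
  intro hmem
  have hspec := compStart_spec hi
  have hle : compStart n L i ≤ compStart n L i - 1 := by
    refine compStart_le (le_trans (Nat.sub_le _ _) hspec.1) (fun c h1 h2 => ?_)
    rcases Nat.lt_or_ge c (compStart n L i) with hc | hc
    · have hc' : c = compStart n L i - 1 := by omega
      subst hc'; exact hmem
    · exact hspec.2 c hc h2
  omega

lemma compEnd_bdd (L : Set (Fin (n-1))) (i : Fin (n-1)) :
    BddAbove {b : ℕ | b < n - 1 ∧ i.1 ≤ b ∧ ∀ c : ℕ, i.1 ≤ c → c ≤ b → memJ n L c} :=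
  ⟨n, fun x hx => le_of_lt (lt_of_lt_of_le hx.1 (Nat.sub_le n 1))⟩

lemma compEnd_spec {L : Set (Fin (n-1))} {i : Fin (n-1)} (hi : i ∈ L) :
    compEnd n L i < n - 1 ∧ i.1 ≤ compEnd n L i ∧
      ∀ c : ℕ, i.1 ≤ c → c ≤ compEnd n L i → memJ n L c := by
  have hne : {b : ℕ | b < n - 1 ∧ i.1 ≤ b ∧
      ∀ c : ℕ, i.1 ≤ c → c ≤ b → memJ n L c}.Nonempty :=
    ⟨i.1, i.2, le_refl _, fun c h1 h2 => by
      have hc : c = i.1 := le_antisymm h2 h1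
      subst hc; exact memJ_self hi⟩
  exact Nat.sSup_mem hne (compEnd_bdd L i)

lemma compEnd_ge {L : Set (Fin (n-1))} {i : Fin (n-1)} {b : ℕ}
    (h0 : b < n - 1) (h1 : i.1 ≤ b) (h2 : ∀ c : ℕ, i.1 ≤ c → c ≤ b → memJ n L c) :
    b ≤ compEnd n L i :=
  le_csSup (compEnd_bdd L i) ⟨h0, h1, h2⟩

lemma compEnd_boundary {L : Set (Fin (n-1))} {i : Fin (n-1)} (hi : i ∈ L)
    (h : compEnd n L i + 1 < n - 1) : ¬ memJ n L (compEnd n L i + 1) := by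
  intro hmem
  have hspec := compEnd_spec hi
  have hle : compEnd n L i + 1 ≤ compEnd n L i := by
    refine compEnd_ge h (by omega) (fun c h1 h2 => ?_)
    rcases Nat.lt_or_ge c (compEnd n L i + 1) with hc | hc
    · exact hspec.2.2 c h1 (by omega)
    · have hc' : c = compEnd n L i + 1 := by omega
      subst hc'; exact hmem
  omega

/-- Adjacent members of `L` have the same connected component. -/
lemma comp_shift {L : Set (Fin (n-1))} {i i' : Fin (n-1)} (hi : i ∈ L) (hi' : i' ∈ L)
    (h : i'.1 = i.1 + 1) :
    compStart n L i' = compStart n L i ∧ compEnd n L i' = compEnd n L i := by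
  have hS := compStart_spec hi
  have hS' := compStart_spec hi'
  have hE := compEnd_spec hi
  have hE' := compEnd_spec hi'
  constructor
  · apply le_antisymm
    · refine compStart_le (by omega) (fun c h1 h2 => ?_)
      rcases Nat.lt_or_ge i.1 c with hc | hc
      · have hc' : c = i'.1 := by omega
        subst hc'; exact memJ_self hi'
      · exact hS.2 c h1 hc
    · have ha'le : compStart n L i' ≤ i.1 := by
        refine compStart_le (by omega) (fun c h1 h2 => ?_)
        rcases Nat.lt_or_ge c i'.1 with hc | hc
        · have hc' : c = i.1 := by omega
          subst hc'; exact memJ_self hi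
        · have hc' : c = i'.1 := by omega
          subst hc'; exact memJ_self hi'
      exact compStart_le ha'le (fun c h1 h2 => hS'.2 c h1 (by omega))
  · have hbge : i'.1 ≤ compEnd n L i := by
      refine compEnd_ge i'.2 (by omega) (fun c h1 h2 => ?_)
      rcases Nat.lt_or_ge c i'.1 with hc | hc
      · have hc' : c = i.1 := by omega
        subst hc'; exact memJ_self hi
      · have hc' : c = i'.1 := by omega
        subst hc'; exact memJ_self hi'
    apply le_antisymm
    · exact compEnd_ge hE'.1 (by omega) (fun c h1 h2 => by
        rcases Nat.lt_or_ge c i'.1 with hc | hc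
        · have hc' : c = i.1 := by omega
          subst hc'; exact memJ_self hi
        · exact hE'.2.2 c hc h2)
    · exact compEnd_ge hE.1 hbge (fun c h1 h2 => hE.2.2 c (by omega) h2)

lemma vJ_nonneg (L : Set (Fin (n-1))) (i : Fin (n-1)) : 0 ≤ vJ n L i := by
  unfold vJ
  split
  · positivity
  · exact le_refl 0

lemma dotR_negAlphaV (i : Fin (n-1)) (v : Fin (n-1) → ℝ) :
    dotR n (negAlphaV n i) v =
      (if _ : 0 < i.1 then v ⟨i.1 - 1, lt_of_le_of_lt (Nat.sub_le _ _) i.2⟩ else 0)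
        - 2 * v i
        + (if h : i.1 + 1 < n - 1 then v ⟨i.1 + 1, h⟩ else 0) := by
  have key : ∀ j : Fin (n-1), negAlphaV n i j * v j =
      (if j.1 + 1 = i.1 then v j else 0) - 2 * (if j = i then v j else 0)
        + (if j.1 = i.1 + 1 then v j else 0) := by
    intro j
    unfold negAlphaV
    split_ifs <;> ring
  unfold dotR
  rw [Finset.sum_congr rfl (fun j _ => key j)]
  rw [Finset.sum_add_distrib, Finset.sum_sub_distrib, ← Finset.mul_sum]
  have h2 : ∑ j : Fin (n-1), (if j = i then v j else 0) = v i := by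
    rw [Finset.sum_ite_eq' Finset.univ i v]
    simp
  have h1 : ∑ j : Fin (n-1), (if j.1 + 1 = i.1 then v j else 0) =
      (if _ : 0 < i.1 then v ⟨i.1 - 1, lt_of_le_of_lt (Nat.sub_le _ _) i.2⟩ else 0) := by
    by_cases hpos : 0 < i.1
    · rw [dif_pos hpos]
      set j0 : Fin (n-1) := ⟨i.1 - 1, lt_of_le_of_lt (Nat.sub_le _ _) i.2⟩ with hj0
      have : ∀ j : Fin (n-1), (if j.1 + 1 = i.1 then v j else 0) =
          (if j = j0 then v j else 0) := by
        intro j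
        refine if_congr ⟨fun hh => Fin.ext (by simp only [hj0]; omega),
          fun hh => by subst hh; simp only [hj0]; omega⟩ rfl rfl
      rw [Finset.sum_congr rfl (fun j _ => this j), Finset.sum_ite_eq' Finset.univ j0 v]
      simp
    · rw [dif_neg hpos]
      exact Finset.sum_eq_zero (fun j _ => if_neg (by omega))
  have h3 : ∑ j : Fin (n-1), (if j.1 = i.1 + 1 then v j else 0) =
      (if h : i.1 + 1 < n - 1 then v ⟨i.1 + 1, h⟩ else 0) := by
    by_cases hlt : i.1 + 1 < n - 1
    · rw [dif_pos hlt]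
      set j1 : Fin (n-1) := ⟨i.1 + 1, hlt⟩ with hj1
      have : ∀ j : Fin (n-1), (if j.1 = i.1 + 1 then v j else 0) =
          (if j = j1 then v j else 0) := by
        intro j
        refine if_congr ⟨fun hh => Fin.ext (by simp only [hj1]; omega),
          fun hh => by subst hh; simp only [hj1]⟩ rfl rfl
      rw [Finset.sum_congr rfl (fun j _ => this j), Finset.sum_ite_eq' Finset.univ j1 v]
      simp
    · rw [dif_neg hlt]
      exact Finset.sum_eq_zero (fun j _ => if_neg (by have := j.2; omega))
  rw [h1, h2, h3]

lemma dot_mem {L : Set (Fin (n-1))} {i : Fin (n-1)} (hi : i ∈ L) :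
    dotR n (negAlphaV n i) (vJ n L) = -2 := by
  have hS := compStart_spec hi
  have hE := compEnd_spec hi
  set a := compStart n L i with ha
  set b := compEnd n L i with hb
  rw [dotR_negAlphaV]
  have hvi : vJ n L i = ((i.1 + 1 - a) * (b + 1 - i.1) : ℕ) := if_pos hi
  have hterm1 : (if _ : 0 < i.1 then
      vJ n L ⟨i.1 - 1, lt_of_le_of_lt (Nat.sub_le _ _) i.2⟩ else 0) =
      (((i.1 - a) * (b + 2 - i.1) : ℕ) : ℝ) := by
    by_cases hpos : 0 < i.1
    · rw [dif_pos hpos]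
      set i' : Fin (n-1) := ⟨i.1 - 1, lt_of_le_of_lt (Nat.sub_le _ _) i.2⟩ with hi'def
      by_cases hcase : a < i.1
      · have hmem' : memJ n L (i.1 - 1) := hS.2 (i.1 - 1) (by omega) (by omega)
        obtain ⟨hlt', hmem'⟩ := hmem'
        have hi'L : i' ∈ L := hmem'
        have hshift := comp_shift hi'L hi (by simp only [hi'def]; omega)
        have hval : vJ n L i' =
            ((i'.1 + 1 - compStart n L i') * (compEnd n L i' + 1 - i'.1) : ℕ) :=
          if_pos hi'L
        rw [hval, ← hshift.1, ← hshift.2, ← ha, ← hb]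
        have hv : i'.1 = i.1 - 1 := rfl
        congr 1
        rw [show i'.1 + 1 - a = i.1 - a by omega,
          show b + 1 - i'.1 = b + 2 - i.1 by omega]
      · have heq : a = i.1 := by omega
        have hnm : ¬ memJ n L (a - 1) := compStart_boundary hi (by omega)
        have hi'notL : i' ∉ L := by
          intro hc
          exact hnm (by
            rw [heq]
            exact ⟨lt_of_le_of_lt (Nat.sub_le _ _) i.2, hc⟩)
        rw [show vJ n L i' = 0 from if_neg hi'notL, show i.1 - a = 0 by omega]
        simp
    · rw [dif_neg hpos]
      rw [show i.1 - a = 0 by omega]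
      simp
  have hterm3 : (if h : i.1 + 1 < n - 1 then vJ n L ⟨i.1 + 1, h⟩ else 0) =
      (((i.1 + 2 - a) * (b - i.1) : ℕ) : ℝ) := by
    by_cases hlt : i.1 + 1 < n - 1
    · rw [dif_pos hlt]
      set i' : Fin (n-1) := ⟨i.1 + 1, hlt⟩ with hi'def
      by_cases hcase : i.1 < b
      · have hmem' : memJ n L (i.1 + 1) := hE.2.2 (i.1 + 1) (by omega) (by omega)
        obtain ⟨hlt', hmem'⟩ := hmem'
        have hi'L : i' ∈ L := hmem'
        have hshift := comp_shift hi hi'L rfl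
        have hval : vJ n L i' =
            ((i'.1 + 1 - compStart n L i') * (compEnd n L i' + 1 - i'.1) : ℕ) :=
          if_pos hi'L
        rw [hval, hshift.1, hshift.2, ← ha, ← hb]
        have hv : i'.1 = i.1 + 1 := rfl
        congr 1
        rw [show i'.1 + 1 - a = i.1 + 2 - a by omega,
          show b + 1 - i'.1 = b - i.1 by omega]
      · have heq : b = i.1 := by omega
        have hnm : ¬ memJ n L (b + 1) := compEnd_boundary hi (by omega)
        have hi'notL : i' ∉ L := by
          intro hc
          exact hnm (by rw [heq]; exact ⟨hlt, hc⟩)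
        rw [show vJ n L i' = 0 from if_neg hi'notL, show b - i.1 = 0 by omega]
        simp
    · rw [dif_neg hlt]
      have := i.2
      rw [show b - i.1 = 0 by omega]
      simp
  rw [hterm1, hvi, hterm3]
  obtain ⟨P, hP⟩ : ∃ P, i.1 = a + P := ⟨i.1 - a, by omega⟩
  obtain ⟨Q, hQ⟩ : ∃ Q, b = i.1 + Q := ⟨b - i.1, by omega⟩
  rw [show i.1 - a = P by omega, show b + 2 - i.1 = Q + 2 by omega,
    show i.1 + 1 - a = P + 1 by omega, show b + 1 - i.1 = Q + 1 by omega,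
    show i.1 + 2 - a = P + 2 by omega, show b - i.1 = Q by omega]
  push_cast
  ring

lemma dot_not_mem {L : Set (Fin (n-1))} {i : Fin (n-1)} (hi : i ∉ L) :
    0 ≤ dotR n (negAlphaV n i) (vJ n L) := by
  rw [dotR_negAlphaV]
  have hvi : vJ n L i = 0 := if_neg hi
  rw [hvi]
  have h1 : 0 ≤ (if _ : 0 < i.1 then
      vJ n L ⟨i.1 - 1, lt_of_le_of_lt (Nat.sub_le _ _) i.2⟩ else 0) := by
    split
    · exact vJ_nonneg L _
    · exact le_refl 0
  have h3 : 0 ≤ (if h : i.1 + 1 < n - 1 then vJ n L ⟨i.1 + 1, h⟩ else 0) := by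
    split
    · exact vJ_nonneg L _
    · exact le_refl 0
  linarith

lemma dotR_smul_add (w x y : Fin (n-1) → ℝ) (p q : ℝ) :
    dotR n w (p • x + q • y) = p * dotR n w x + q * dotR n w y := by
  unfold dotR
  rw [Finset.mul_sum, Finset.mul_sum, ← Finset.sum_add_distrib]
  refine Finset.sum_congr rfl (fun j _ => ?_)
  simp only [Pi.add_apply, Pi.smul_apply, smul_eq_mul]
  ring

lemma convex_dot_eq (w : Fin (n-1) → ℝ) (c : ℝ) :
    Convex ℝ {x : Fin (n-1) → ℝ | dotR n w x = c} := by
  intro x hx y hy p q hp hq hpq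
  simp only [Set.mem_setOf_eq] at *
  rw [dotR_smul_add, hx, hy, ← add_mul, hpq, one_mul]

lemma convex_dot_ge (w : Fin (n-1) → ℝ) :
    Convex ℝ {x : Fin (n-1) → ℝ | 0 ≤ dotR n w x} := by
  intro x hx y hy p q hp hq hpq
  simp only [Set.mem_setOf_eq] at *
  rw [dotR_smul_add]
  have := mul_nonneg hp hx
  have := mul_nonneg hq hy
  linarith

lemma Fplus_dot {i : Fin (n-1)} {x : Fin (n-1) → ℝ} (hx : x ∈ Fplus n i) :
    dotR n (negAlphaV n i) x = -2 := by
  refine convexHull_min ?_ (convex_dot_eq _ _) hx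
  rintro _ ⟨L, hiL, rfl⟩
  exact dot_mem hiL

lemma Fminus_dot {i : Fin (n-1)} {x : Fin (n-1) → ℝ} (hx : x ∈ Fminus n i) :
    0 ≤ dotR n (negAlphaV n i) x := by
  refine convexHull_min ?_ (convex_dot_ge _) hx
  rintro _ ⟨L, hiL, rfl⟩
  exact dot_not_mem hiL

lemma vJ_mem_FKJ {K J L : Set (Fin (n-1))} (h1 : K ⊆ L) (h2 : L ⊆ J) :
    vJ n L ∈ FKJ n K J := by
  refine ⟨⟨subset_convexHull ℝ _ ⟨L, rfl⟩, ?_⟩, ?_⟩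
  · exact Set.mem_iInter₂.2 fun i hi => subset_convexHull ℝ _ ⟨L, h1 hi, rfl⟩
  · exact Set.mem_iInter₂.2 fun i hi => subset_convexHull ℝ _ ⟨L, fun hL => hi (h2 hL), rfl⟩

lemma subsets_of_vJ_mem {K' J' L : Set (Fin (n-1))} (h : vJ n L ∈ FKJ n K' J') :
    K' ⊆ L ∧ L ⊆ J' := by
  obtain ⟨⟨_, h1⟩, h2⟩ := h
  constructor
  · intro i hi
    by_contra hiL
    have e := Fplus_dot (Set.mem_iInter₂.1 h1 i hi)
    have g := dot_not_mem hiL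
    linarith
  · intro i hiL
    by_contra hiJ
    have g := Fminus_dot (Set.mem_iInter₂.1 h2 i hiJ)
    have e := dot_mem hiL
    linarith

lemma FKJ_mono {K J K' J' : Set (Fin (n-1))} (hK : K' ⊆ K) (hJ : J ⊆ J') :
    FKJ n K J ⊆ FKJ n K' J' := by
  rintro x ⟨⟨h0, h1⟩, h2⟩
  exact ⟨⟨h0, Set.mem_iInter₂.2 fun i hi => Set.mem_iInter₂.1 h1 i (hK hi)⟩,
    Set.mem_iInter₂.2 fun i hi => Set.mem_iInter₂.1 h2 i (fun hij => hi (hJ hij))⟩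

end Aux

/-- Proposition: for `K ⊆ J ⊆ [n-1]` and `K' ⊆ J' ⊆ [n-1]`,
`F_{K,J} ⊆ F_{K',J'}` iff `K' ⊆ K` and `J ⊆ J'`; with equality iff `K = K'` and
`J = J'`. -/
theorem face_inclusion_iff (n : ℕ) (hn : 2 ≤ n) (K J K' J' : Set (Fin (n-1)))
    (hKJ : K ⊆ J) (hKJ' : K' ⊆ J') :
    (FKJ n K J ⊆ FKJ n K' J' ↔ (K' ⊆ K ∧ J ⊆ J')) ∧
    (FKJ n K J = FKJ n K' J' ↔ (K = K' ∧ J = J')) := by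
  have main : FKJ n K J ⊆ FKJ n K' J' ↔ (K' ⊆ K ∧ J ⊆ J') := by
    constructor
    · intro h
      have hK := subsets_of_vJ_mem (h (vJ_mem_FKJ (le_refl K) hKJ))
      have hJ := subsets_of_vJ_mem (h (vJ_mem_FKJ hKJ (le_refl J)))
      exact ⟨hK.1, hJ.2⟩
    · rintro ⟨h1, h2⟩
      exact FKJ_mono h1 h2
  have main' : FKJ n K' J' ⊆ FKJ n K J ↔ (K ⊆ K' ∧ J' ⊆ J) := by
    constructor
    · intro h
      have hK := subsets_of_vJ_mem (h (vJ_mem_FKJ (le_refl K') hKJ'))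
      have hJ := subsets_of_vJ_mem (h (vJ_mem_FKJ hKJ' (le_refl J')))
      exact ⟨hK.1, hJ.2⟩
    · rintro ⟨h1, h2⟩
      exact FKJ_mono h1 h2
  refine ⟨main, ?_⟩
  constructor
  · intro h
    have e1 := main.1 h.le
    have e2 := main'.1 h.ge
    exact ⟨le_antisymm e2.1 e1.1, le_antisymm e1.2 e2.2⟩
  · rintro ⟨rfl, rfl⟩
    rfl

end PetersonPaper
end
end

section
/- Let n ≥ 2, J ⊆ [n-1], and let x be a J-block diagonal lower triangular matrix in SL_n(ℂ) with 1's on the diagonal. Then x ∈ U^-_{≥0} if and only if for every k ∈ {1,...,m}, the diagonal block x(J'_k), viewed as an n_k × n_k matrix, lies in the submonoid of SL_{n_k}(ℂ) generated by {I + a E_{p+1,p} : 1 ≤ p ≤ n_k − 1, a ∈ ℝ, a ≥ 0}. -/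
open Matrix

attribute [local instance] Classical.propDecidable

noncomputable section

namespace PetersonPaper

/-- Zero above the diagonal: `M i j = 0` whenever `i < j` (lower triangular). -/
def lowerTri (n : ℕ) (M : Matrix (Fin n) (Fin n) ℂ) : Prop :=
  ∀ i j : Fin n, i < j → M i j = 0

/-- Zero below the diagonal: `M i j = 0` whenever `j < i` (upper triangular). -/
def upperTri (n : ℕ) (M : Matrix (Fin n) (Fin n) ℂ) : Prop :=
  ∀ i j : Fin n, j < i → M i j = 0

/-- The regular nilpotent matrix `f`, with `(i,j)` entry `1` iff `i = j+1`. -/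
def fMat (n : ℕ) : Matrix (Fin n) (Fin n) ℂ :=
  fun i j => if (i : ℕ) = (j : ℕ) + 1 then 1 else 0

/-- `Δ_i(g)`: the lower-right `(n-i)×(n-i)` minor of `g`.  Here `i : Fin (n-1)`
encodes the (1-based) index `i.1 + 1 ∈ {1,…,n-1}`. -/
def Delta (n : ℕ) (g : Matrix (Fin n) (Fin n) ℂ) (i : Fin (n-1)) : ℂ :=
  (g.submatrix
    (fun k : Fin (n - (i.1 + 1)) => (⟨k.1 + (i.1 + 1), by have := k.isLt; omega⟩ : Fin n))
    (fun k : Fin (n - (i.1 + 1)) => (⟨k.1 + (i.1 + 1), by have := k.isLt; omega⟩ : Fin n))).det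

/-- `q_i(g) = -(g⁻¹ f g)_{i,i+1}` (1-based indices; `i : Fin (n-1)` encodes `i.1+1`). -/
def qfun (n : ℕ) (g : Matrix (Fin n) (Fin n) ℂ) (i : Fin (n-1)) : ℂ :=
  -((g⁻¹ * fMat n * g) (⟨i.1, by have := i.isLt; omega⟩ : Fin n)
      (⟨i.1 + 1, by have := i.isLt; omega⟩ : Fin n))

/-- The (0-based) gap `c` (between positions `c` and `c+1` of `Fin n`) belongs to
`J ⊆ [n-1]`; `c` encodes the 1-based element `c+1` of `[n-1]`. -/
def gapMem (n : ℕ) (J : Set (Fin (n-1))) (c : ℕ) : Prop :=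
  ∃ h : c < n - 1, (⟨c, h⟩ : Fin (n-1)) ∈ J

/-- The (0-based) first position of the block of the partition of `{0,…,n-1}`
determined by `J` containing the position `p`. -/
def blockStart (n : ℕ) (J : Set (Fin (n-1))) (p : Fin n) : ℕ :=
  sInf {a : ℕ | a ≤ p.1 ∧ ∀ c : ℕ, a ≤ c → c < p.1 → gapMem n J c}

/-- The (0-based) last position of the block of the partition of `{0,…,n-1}`
determined by `J` containing the position `p`. -/
def blockEnd (n : ℕ) (J : Set (Fin (n-1))) (p : Fin n) : ℕ :=
  sSup {b : ℕ | b < n ∧ p.1 ≤ b ∧ ∀ c : ℕ, p.1 ≤ c → c < b → gapMem n J c}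

lemma blockStart_le (n : ℕ) (J : Set (Fin (n-1))) (p : Fin n) : blockStart n J p ≤ p.1 :=
  Nat.sInf_le ⟨le_refl _, fun c hc1 hc2 => absurd (lt_of_le_of_lt hc1 hc2) (lt_irrefl _)⟩

lemma blockEnd_mem (n : ℕ) (J : Set (Fin (n-1))) (p : Fin n) :
    blockEnd n J p ∈ {b : ℕ | b < n ∧ p.1 ≤ b ∧ ∀ c : ℕ, p.1 ≤ c → c < b → gapMem n J c} :=
  Nat.sSup_mem
    ⟨p.1, p.isLt, le_refl _, fun c hc1 hc2 => absurd (lt_of_le_of_lt hc1 hc2) (lt_irrefl _)⟩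
    ⟨n, fun _ hb => le_of_lt hb.1⟩

lemma blockEnd_lt (n : ℕ) (J : Set (Fin (n-1))) (p : Fin n) : blockEnd n J p < n :=
  (blockEnd_mem n J p).1

lemma le_blockEnd (n : ℕ) (J : Set (Fin (n-1))) (p : Fin n) : p.1 ≤ blockEnd n J p :=
  (blockEnd_mem n J p).2.1

/-- The representative `ẇ_J` of the longest element of the Young subgroup determined
by `J ⊆ [n-1]`: block diagonal, with the antidiagonal matrix with entries
`(-1)^(row - blockStart)` on each block of the partition determined by `J`. -/
def wJ (n : ℕ) (J : Set (Fin (n-1))) : Matrix (Fin n) (Fin n) ℂ :=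
  fun p q =>
    if (p : ℕ) + (q : ℕ) = blockStart n J p + blockEnd n J p
    then (-1 : ℂ) ^ ((p : ℕ) - blockStart n J p) else 0

/-- A `J`-Toeplitz matrix: block diagonal with respect to the partition determined by
`J`, each block being lower triangular Toeplitz with `1`'s on the diagonal. -/
def IsJToeplitz (n : ℕ) (J : Set (Fin (n-1))) (x : Matrix (Fin n) (Fin n) ℂ) : Prop :=
  ∃ c : ℕ → ℕ → ℂ, (∀ a, c a 0 = 1) ∧
    ∀ p q : Fin n, x p q =
      if blockStart n J p = blockStart n J q ∧ (q : ℕ) ≤ (p : ℕ)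
      then c (blockStart n J p) ((p : ℕ) - (q : ℕ)) else 0

/-- `g ∈ B⁺ ẇ_K B⁻` (at the level of matrices of determinant 1). -/
def inBruhatPlus (n : ℕ) (K : Set (Fin (n-1))) (g : Matrix (Fin n) (Fin n) ℂ) : Prop :=
  ∃ b₁ b₂ : Matrix (Fin n) (Fin n) ℂ,
    b₁.det = 1 ∧ b₂.det = 1 ∧ upperTri n b₁ ∧ lowerTri n b₂ ∧ g = b₁ * wJ n K * b₂

/-- `g ∈ B⁻ ẇ_J B⁻` (at the level of matrices of determinant 1). -/
def inBruhatMinus (n : ℕ) (J : Set (Fin (n-1))) (g : Matrix (Fin n) (Fin n) ℂ) : Prop :=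
  ∃ b₁ b₂ : Matrix (Fin n) (Fin n) ℂ,
    b₁.det = 1 ∧ b₂.det = 1 ∧ lowerTri n b₁ ∧ lowerTri n b₂ ∧ g = b₁ * wJ n J * b₂

/-- `x_i(a) = I + a E_{i,i+1}` (1-based indices; `i : Fin (m-1)` encodes `i.1+1`). -/
def xMat (m : ℕ) (i : Fin (m-1)) (a : ℝ) : Matrix (Fin m) (Fin m) ℂ :=
  1 + Matrix.single (⟨i.1, by have := i.isLt; omega⟩ : Fin m)
      (⟨i.1 + 1, by have := i.isLt; omega⟩ : Fin m) (a : ℂ)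

/-- `y_i(a) = I + a E_{i+1,i}` (1-based indices; `i : Fin (m-1)` encodes `i.1+1`). -/
def yMat (m : ℕ) (i : Fin (m-1)) (a : ℝ) : Matrix (Fin m) (Fin m) ℂ :=
  1 + Matrix.single (⟨i.1 + 1, by have := i.isLt; omega⟩ : Fin m)
      (⟨i.1, by have := i.isLt; omega⟩ : Fin m) (a : ℂ)

/-- The simple transposition `s_i = (i, i+1)` of `S_n` (1-based; `i : Fin (n-1)`
encodes `i.1+1`). -/
def simpleRefl (n : ℕ) (i : Fin (n-1)) : Equiv.Perm (Fin n) :=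
  Equiv.swap (⟨i.1, by have := i.isLt; omega⟩ : Fin n)
    (⟨i.1 + 1, by have := i.isLt; omega⟩ : Fin n)

/-- `U⁺_{>0}`: the set `{x_{i_1}(a_1) ⋯ x_{i_N}(a_N) : a_k > 0}` attached to a fixed
word `word = (i_1, …, i_N)`. -/
def UposSet (n : ℕ) (word : List (Fin (n-1))) : Set (Matrix (Fin n) (Fin n) ℂ) :=
  { M | ∃ a : Fin word.length → ℝ, (∀ k, 0 < a k) ∧
      M = (List.ofFn fun k : Fin word.length => xMat n (word.get k) (a k)).prod }

/-- `U⁻_{>0}`: the set `{y_{i_1}(a_1) ⋯ y_{i_N}(a_N) : a_k > 0}` attached to a fixed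
word `word = (i_1, …, i_N)`. -/
def UnegPosSet (n : ℕ) (word : List (Fin (n-1))) : Set (Matrix (Fin n) (Fin n) ℂ) :=
  { M | ∃ a : Fin word.length → ℝ, (∀ k, 0 < a k) ∧
      M = (List.ofFn fun k : Fin word.length => yMat n (word.get k) (a k)).prod }

/-- `U⁻_{≥0}`: the submonoid generated by the `y_i(a)` for `a ≥ 0`. -/
def UnegMonoid (m : ℕ) : Submonoid (Matrix (Fin m) (Fin m) ℂ) :=
  Submonoid.closure { M | ∃ (i : Fin (m-1)) (a : ℝ), 0 ≤ a ∧ M = yMat m i a }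

/-- The longest permutation matrix `ẇ_0`, with `(p,q)` entry `(-1)^{p-1}` iff
`p + q = n + 1` (1-based), i.e. `(-1)^p` iff `p + q = n - 1` (0-based). -/
def w0Mat (n : ℕ) : Matrix (Fin n) (Fin n) ℂ :=
  fun p q => if (p : ℕ) + (q : ℕ) = n - 1 then (-1 : ℂ) ^ (p : ℕ) else 0


lemma sum_block {n s m : ℕ} (h : s + m ≤ n) (f : Fin n → ℂ)
    (hf : ∀ r : Fin n, ¬(s ≤ r.1 ∧ r.1 < s + m) → f r = 0) :
    ∑ r : Fin n, f r = ∑ k : Fin m, f ⟨s + k.1, by have := k.isLt; omega⟩ := by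
  classical
  have himg : (Finset.univ.filter (fun r : Fin n => s ≤ r.1 ∧ r.1 < s + m))
      = Finset.image (fun k : Fin m => (⟨s + k.1, by have := k.isLt; omega⟩ : Fin n))
        Finset.univ := by
    ext r
    simp only [Finset.mem_filter, Finset.mem_univ, true_and, Finset.mem_image]
    constructor
    · rintro ⟨h1, h2⟩
      exact ⟨⟨r.1 - s, by omega⟩, by ext; simp; omega⟩
    · rintro ⟨k, rfl⟩
      exact ⟨Nat.le_add_right s k.1, show s + k.1 < s + m by have := k.isLt; omega⟩
  rw [← Finset.sum_filter_of_ne (p := fun r : Fin n => s ≤ r.1 ∧ r.1 < s + m)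
      (fun r _ hr => by by_contra hc; exact hr (hf r hc))]
  rw [himg, Finset.sum_image]
  intro a _ b _ hab
  ext
  have := Fin.mk.injEq (s + a.1) _ (s + b.1) _ ▸ hab
  omega

def emb (n s m : ℕ) (h : s + m ≤ n) (M : Matrix (Fin m) (Fin m) ℂ) :
    Matrix (Fin n) (Fin n) ℂ :=
  fun p q => if hpq : s ≤ p.1 ∧ p.1 < s + m ∧ s ≤ q.1 ∧ q.1 < s + m
    then M ⟨p.1 - s, by omega⟩ ⟨q.1 - s, by omega⟩
    else if p = q then 1 else 0

def restr (n s m : ℕ) (h : s + m ≤ n) (M : Matrix (Fin n) (Fin n) ℂ) :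
    Matrix (Fin m) (Fin m) ℂ :=
  M.submatrix (fun k : Fin m => (⟨s + k.1, by have := k.isLt; omega⟩ : Fin n))
    (fun k : Fin m => (⟨s + k.1, by have := k.isLt; omega⟩ : Fin n))

lemma emb_one (n s m : ℕ) (h : s + m ≤ n) : emb n s m h 1 = 1 := by
  funext p q
  simp only [emb, Matrix.one_apply]
  split
  · rename_i hpq
    by_cases hpq2 : p = q
    · subst hpq2; simp [Fin.ext_iff]
    · have : ¬ ((⟨p.1 - s, by omega⟩ : Fin m) = ⟨q.1 - s, by omega⟩) := by
        simp [Fin.ext_iff]; intro hc; apply hpq2; ext; omega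
      simp [this, hpq2]
  · rfl

lemma emb_mul (n s m : ℕ) (h : s + m ≤ n) (A B : Matrix (Fin m) (Fin m) ℂ) :
    emb n s m h (A * B) = emb n s m h A * emb n s m h B := by
  funext p q
  rw [Matrix.mul_apply]
  by_cases hp : s ≤ p.1 ∧ p.1 < s + m
  · have hsum : ∑ r : Fin n, emb n s m h A p r * emb n s m h B r q
        = ∑ k : Fin m, emb n s m h A p ⟨s + k.1, by have := k.isLt; omega⟩ *
            emb n s m h B ⟨s + k.1, by have := k.isLt; omega⟩ q := by
      apply sum_block h
      intro r hr
      have : emb n s m h A p r = 0 := by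
        simp only [emb]
        rw [dif_neg (by tauto)]
        have : p ≠ r := by intro hc; subst hc; exact hr hp
        simp [this]
      rw [this, zero_mul]
    rw [hsum]
    by_cases hq : s ≤ q.1 ∧ q.1 < s + m
    · have : emb n s m h (A * B) p q = (A * B) ⟨p.1 - s, by omega⟩ ⟨q.1 - s, by omega⟩ := by
        simp only [emb]; rw [dif_pos ⟨hp.1, hp.2, hq.1, hq.2⟩]
      rw [this, Matrix.mul_apply]
      apply Finset.sum_congr rfl
      intro k _
      simp only [emb]
      rw [dif_pos ⟨hp.1, hp.2, by omega, by omega⟩, dif_pos ⟨by omega, by omega, hq.1, hq.2⟩]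
      congr 2 <;> (ext; simp only [Fin.val_mk]; omega)
    · have h1 : emb n s m h (A * B) p q = 0 := by
        simp only [emb]
        rw [dif_neg (by tauto)]
        have : p ≠ q := by intro hc; subst hc; exact hq hp
        simp [this]
      rw [h1]
      apply (Finset.sum_eq_zero ?_).symm
      intro k _
      have : emb n s m h B ⟨s + k.1, by have := k.isLt; omega⟩ q = 0 := by
        simp only [emb]
        rw [dif_neg (by tauto)]
        have : (⟨s + k.1, by have := k.isLt; omega⟩ : Fin n) ≠ q := by
          intro hc; apply hq; rw [← hc]; exact ⟨Nat.le_add_right s k.1, show s + k.1 < s + m by have := k.isLt; omega⟩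
        simp [this]
      rw [this, mul_zero]
  · have hval : ∀ r : Fin n, emb n s m h A p r = if p = r then 1 else 0 := by
      intro r
      simp only [emb]
      rw [dif_neg (by tauto)]
    have h2 : ∑ r : Fin n, emb n s m h A p r * emb n s m h B r q
        = emb n s m h B p q := by
      rw [Finset.sum_eq_single p]
      · rw [hval]; simp
      · intro r _ hr; rw [hval]; simp [(Ne.symm hr : ¬ p = r)]
      · simp
    rw [h2]
    simp only [emb]
    rw [dif_neg (by tauto), dif_neg (by tauto)]

lemma yMat_apply (m : ℕ) (i : Fin (m-1)) (a : ℝ) (p q : Fin m) :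
    yMat m i a p q = (if p = q then 1 else 0) +
      (if p.1 = i.1 + 1 ∧ q.1 = i.1 then (a : ℂ) else 0) := by
  simp only [yMat, Matrix.add_apply, Matrix.one_apply, Matrix.single, Matrix.of_apply]
  congr 1
  by_cases h : p.1 = i.1 + 1 ∧ q.1 = i.1
  · rw [if_pos h, if_pos ⟨by ext; simp [h.1], by ext; simp [h.2]⟩]
  · rw [if_neg h, if_neg (by simp [Fin.ext_iff]; tauto)]

lemma lowerTri_one (n : ℕ) : lowerTri n 1 := by
  intro i j hij
  rw [Matrix.one_apply_ne (Fin.ne_of_lt hij)]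

lemma lowerTri_yMat (n : ℕ) (i : Fin (n-1)) (a : ℝ) : lowerTri n (yMat n i a) := by
  intro p q hpq
  rw [yMat_apply]
  rw [if_neg (Fin.ne_of_lt hpq), if_neg (by rintro ⟨h1, h2⟩; rw [Fin.lt_def] at hpq; omega)]
  simp

lemma lowerTri_mul (n : ℕ) (A B : Matrix (Fin n) (Fin n) ℂ)
    (hA : lowerTri n A) (hB : lowerTri n B) : lowerTri n (A * B) := by
  intro i j hij
  rw [Matrix.mul_apply]
  apply Finset.sum_eq_zero
  intro r _
  by_cases hr : i < r
  · rw [hA i r hr, zero_mul]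
  · rw [hB r j (lt_of_le_of_lt (not_lt.mp hr) hij), mul_zero]


lemma restr_one (n s m : ℕ) (h : s + m ≤ n) : restr n s m h 1 = 1 := by
  funext k l
  simp only [restr, Matrix.submatrix_apply, Matrix.one_apply]
  by_cases hkl : k = l
  · subst hkl; simp
  · rw [if_neg (by simp [Fin.ext_iff]; intro hc; exact hkl (by ext; omega)), if_neg hkl]

lemma restr_mul (n s m : ℕ) (h : s + m ≤ n) (A B : Matrix (Fin n) (Fin n) ℂ)
    (hA : lowerTri n A) (hB : lowerTri n B) :
    restr n s m h (A * B) = restr n s m h A * restr n s m h B := by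
  funext k l
  simp only [restr, Matrix.submatrix_apply, Matrix.mul_apply]
  rw [sum_block h _ (fun r hr => by
    by_cases hr2 : r.1 < s
    · rw [hB r _ (by rw [Fin.lt_def]; simp only [Fin.val_mk]; omega), mul_zero]
    · rw [hA _ r (by rw [Fin.lt_def]; simp only [Fin.val_mk]; have := k.isLt; omega), zero_mul])]

lemma restr_yMat_in (n s m : ℕ) (h : s + m ≤ n) (i : Fin (n-1))
    (hi : s ≤ i.1) (hi2 : i.1 + 1 < s + m) (a : ℝ) :
    restr n s m h (yMat n i a) = yMat m ⟨i.1 - s, by omega⟩ a := by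
  funext k l
  simp only [restr, Matrix.submatrix_apply]
  rw [yMat_apply, yMat_apply]
  congr 1
  · by_cases hkl : k = l
    · subst hkl; simp
    · rw [if_neg (by simp [Fin.ext_iff]; intro hc; exact hkl (by ext; omega)), if_neg hkl]
  · by_cases hc : k.1 = (i.1 - s) + 1 ∧ l.1 = i.1 - s
    · rw [if_pos (by simp; omega), if_pos (by simp; omega)]
    · rw [if_neg (by (try simp only [Fin.val_mk]); omega), if_neg (by (try simp only [Fin.val_mk]); omega)]

lemma restr_yMat_out (n s m : ℕ) (h : s + m ≤ n) (i : Fin (n-1))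
    (hi : ¬ (s ≤ i.1 ∧ i.1 + 1 < s + m)) (a : ℝ) :
    restr n s m h (yMat n i a) = 1 := by
  funext k l
  simp only [restr, Matrix.submatrix_apply]
  rw [yMat_apply, Matrix.one_apply]
  have hk := k.isLt
  have hl := l.isLt
  by_cases hkl : k = l
  · subst hkl
    rw [if_pos rfl, if_pos rfl, if_neg (by (try simp only [Fin.val_mk]); omega), add_zero]
  · rw [if_neg (fun hc => hkl (Fin.ext (Nat.add_left_cancel (congrArg Fin.val hc)))),
      if_neg (by (try simp only [Fin.val_mk]); omega), if_neg hkl]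
    simp

lemma emb_yMat (n s m : ℕ) (h : s + m ≤ n) (i : Fin (m-1)) (a : ℝ) :
    emb n s m h (yMat m i a) =
      yMat n ⟨s + i.1, by have := i.isLt; omega⟩ a := by
  funext p q
  simp only [emb]
  rw [yMat_apply]
  have hi := i.isLt
  by_cases hpq : s ≤ p.1 ∧ p.1 < s + m ∧ s ≤ q.1 ∧ q.1 < s + m
  · rw [dif_pos hpq, yMat_apply]
    congr 1
    · by_cases hc : p = q
      · subst hc; simp
      · have hc' : p.1 ≠ q.1 := fun hc2 => hc (Fin.ext hc2)
        rw [if_neg (by simp only [Fin.ext_iff, Fin.val_mk]; omega), if_neg hc]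
    · by_cases hc : p.1 = (s + i.1) + 1 ∧ q.1 = s + i.1
      · rw [if_pos (by (try simp only [Fin.val_mk]); omega), if_pos (by (try simp only [Fin.val_mk]); omega)]
      · rw [if_neg (by (try simp only [Fin.val_mk]); omega), if_neg (by (try simp only [Fin.val_mk]); omega)]
  · rw [dif_neg hpq]
    rw [if_neg (show ¬(p.1 = (⟨s + i.1, by have := i.isLt; omega⟩ : Fin n).1 + 1 ∧
        q.1 = (⟨s + i.1, by have := i.isLt; omega⟩ : Fin n).1) by
      simp only [Fin.val_mk]; omega), add_zero]

lemma emb_mem (n s m : ℕ) (h : s + m ≤ n) (M : Matrix (Fin m) (Fin m) ℂ)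
    (hM : M ∈ UnegMonoid m) : emb n s m h M ∈ UnegMonoid n := by
  induction hM using Submonoid.closure_induction with
  | mem x hx =>
    obtain ⟨i, a, ha, rfl⟩ := hx
    rw [emb_yMat]
    exact Submonoid.subset_closure ⟨_, a, ha, rfl⟩
  | one => rw [emb_one]; exact one_mem _
  | mul x y hx hy ihx ihy => rw [emb_mul]; exact mul_mem ihx ihy

lemma restr_mem (n s m : ℕ) (h : s + m ≤ n) (M : Matrix (Fin n) (Fin n) ℂ)
    (hM : M ∈ UnegMonoid n) : lowerTri n M ∧ restr n s m h M ∈ UnegMonoid m := by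
  induction hM using Submonoid.closure_induction with
  | mem x hx =>
    obtain ⟨i, a, ha, rfl⟩ := hx
    refine ⟨lowerTri_yMat n i a, ?_⟩
    by_cases hc : s ≤ i.1 ∧ i.1 + 1 < s + m
    · rw [restr_yMat_in n s m h i hc.1 hc.2]
      exact Submonoid.subset_closure ⟨⟨i.1 - s, by omega⟩, a, ha, rfl⟩
    · rw [restr_yMat_out n s m h i hc]
      exact one_mem _
  | one => exact ⟨lowerTri_one n, by rw [restr_one]; exact one_mem _⟩
  | mul x y hx hy ihx ihy =>
    exact ⟨lowerTri_mul n x y ihx.1 ihy.1,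
      by rw [restr_mul n s m h x y ihx.1 ihy.1]; exact mul_mem ihx.2 ihy.2⟩

lemma blockStart_mem (n : ℕ) (J : Set (Fin (n-1))) (p : Fin n) :
    blockStart n J p ∈ {a : ℕ | a ≤ p.1 ∧ ∀ c : ℕ, a ≤ c → c < p.1 → gapMem n J c} :=
  Nat.sInf_mem ⟨p.1, le_refl _,
    fun c hc1 hc2 => absurd (lt_of_le_of_lt hc1 hc2) (lt_irrefl _)⟩

lemma gap_all (n : ℕ) (J : Set (Fin (n-1))) (p : Fin n) :
    ∀ c : ℕ, blockStart n J p ≤ c → c < blockEnd n J p → gapMem n J c := by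
  intro c h1 h2
  by_cases hc : c < p.1
  · exact (blockStart_mem n J p).2 c h1 hc
  · exact (blockEnd_mem n J p).2.2 c (not_lt.mp hc) h2

lemma bddAbove_blockEnd_set (n : ℕ) (J : Set (Fin (n-1))) (q : Fin n) :
    BddAbove {b : ℕ | b < n ∧ q.1 ≤ b ∧ ∀ c : ℕ, q.1 ≤ c → c < b → gapMem n J c} :=
  ⟨n, fun _ hb => le_of_lt hb.1⟩

lemma block_eq (n : ℕ) (J : Set (Fin (n-1))) (p q : Fin n)
    (h1 : blockStart n J p ≤ q.1) (h2 : q.1 ≤ blockEnd n J p) :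
    blockStart n J q = blockStart n J p ∧ blockEnd n J q = blockEnd n J p := by
  have hgap := gap_all n J p
  have hsp := blockStart_mem n J p
  have hep := blockEnd_mem n J p
  have hsq := blockStart_mem n J q
  have heq := blockEnd_mem n J q
  constructor
  · have hle : blockStart n J q ≤ blockStart n J p :=
      Nat.sInf_le ⟨h1, fun c hc1 hc2 => hgap c hc1 (lt_of_lt_of_le hc2 h2)⟩
    have hge : blockStart n J p ≤ blockStart n J q := by
      by_contra hcon
      push_neg at hcon
      have hmem : blockStart n J q ∈
          {a : ℕ | a ≤ p.1 ∧ ∀ c : ℕ, a ≤ c → c < p.1 → gapMem n J c} := by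
        refine ⟨le_trans (le_of_lt hcon) hsp.1, fun c hc1 hc2 => ?_⟩
        by_cases hcs : c < blockStart n J p
        · exact hsq.2 c hc1 (lt_of_lt_of_le hcs h1)
        · exact hgap c (not_lt.mp hcs) (lt_of_lt_of_le hc2 hep.2.1)
      exact absurd (Nat.sInf_le hmem) (not_le.mpr hcon)
    omega
  · have hle : blockEnd n J p ≤ blockEnd n J q :=
      le_csSup (bddAbove_blockEnd_set n J q)
        ⟨blockEnd_lt n J p, h2, fun c hc1 hc2 => hgap c (le_trans h1 hc1) hc2⟩
    have hge : blockEnd n J q ≤ blockEnd n J p := by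
      by_contra hcon
      push_neg at hcon
      have hmem : blockEnd n J q ∈
          {b : ℕ | b < n ∧ p.1 ≤ b ∧ ∀ c : ℕ, p.1 ≤ c → c < b → gapMem n J c} := by
        refine ⟨blockEnd_lt n J q, le_trans hep.2.1 (le_of_lt hcon), fun c hc1 hc2 => ?_⟩
        by_cases hce : c < blockEnd n J p
        · exact hgap c (le_trans hsp.1 hc1) hce
        · exact heq.2.2 c (le_trans h2 (not_lt.mp hce)) hc2
      exact absurd (le_csSup (bddAbove_blockEnd_set n J p) hmem) (not_le.mpr hcon)
    omega

lemma blockEnd_eq_of_start_eq (n : ℕ) (J : Set (Fin (n-1))) (p q : Fin n)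
    (h : blockStart n J p = blockStart n J q) : blockEnd n J p = blockEnd n J q := by
  rcases le_total q.1 p.1 with hle | hle
  · exact ((block_eq n J p q (h ▸ blockStart_le n J q)
      (le_trans hle (le_blockEnd n J p))).2).symm
  · exact (block_eq n J q p (h ▸ blockStart_le n J p)
      (le_trans hle (le_blockEnd n J q))).2

lemma mem_block_iff (n : ℕ) (J : Set (Fin (n-1))) (p q : Fin n) :
    blockStart n J q = blockStart n J p ↔
      (blockStart n J p ≤ q.1 ∧ q.1 ≤ blockEnd n J p) := by
  constructor
  · intro h
    refine ⟨h ▸ blockStart_le n J q, ?_⟩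
    rw [← blockEnd_eq_of_start_eq n J q p h]
    exact le_blockEnd n J q
  · intro h
    exact (block_eq n J p q h.1 h.2).1

lemma restr_eq_one_of (n s m : ℕ) (h : s + m ≤ n) (x : Matrix (Fin n) (Fin n) ℂ)
    (hx : ∀ p q : Fin n, s ≤ p.1 → p.1 < s + m → s ≤ q.1 → q.1 < s + m →
      x p q = if p = q then 1 else 0) :
    restr n s m h x = 1 := by
  funext k l
  simp only [restr, Matrix.submatrix_apply]
  have hk := k.isLt
  have hl := l.isLt
  rw [hx _ _ (by simp) (by (try simp only [Fin.val_mk]); omega) (by simp)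
    (by (try simp only [Fin.val_mk]); omega), Matrix.one_apply]
  by_cases hkl : k = l
  · subst hkl; simp
  · rw [if_neg (fun hc => hkl (Fin.ext (Nat.add_left_cancel (congrArg Fin.val hc)))),
      if_neg hkl]

lemma restr_congr (n s m : ℕ) (h : s + m ≤ n) (x y : Matrix (Fin n) (Fin n) ℂ)
    (hxy : ∀ p q : Fin n, s ≤ p.1 → p.1 < s + m → s ≤ q.1 → q.1 < s + m → x p q = y p q) :
    restr n s m h x = restr n s m h y := by
  funext k l
  have hk := k.isLt
  have hl := l.isLt
  simp only [restr, Matrix.submatrix_apply]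
  exact hxy _ _ (by simp) (by (try simp only [Fin.val_mk]); omega) (by simp)
    (by (try simp only [Fin.val_mk]); omega)

lemma hsm_pf (n : ℕ) (J : Set (Fin (n-1))) (p : Fin n) :
    blockStart n J p + (blockEnd n J p - blockStart n J p + 1) ≤ n := by
  have h1 := blockStart_le n J p
  have h2 := le_blockEnd n J p
  have h3 := blockEnd_lt n J p
  omega

lemma block_step (n : ℕ) (J : Set (Fin (n-1))) (s m : ℕ) (hsm : s + m ≤ n)
    (x : Matrix (Fin n) (Fin n) ℂ)
    (hchar : ∀ q : Fin n, blockStart n J q = s ↔ (s ≤ q.1 ∧ q.1 < s + m))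
    (hblk : ∀ p q : Fin n, blockStart n J p ≠ blockStart n J q → x p q = 0) :
    x = emb n s m hsm (restr n s m hsm x) *
      Matrix.of (fun p q => if blockStart n J p = s then (if p = q then 1 else 0) else x p q)
        := by
  funext p q
  rw [Matrix.mul_apply]
  by_cases hp : s ≤ p.1 ∧ p.1 < s + m
  · rw [sum_block hsm _ (fun r hr => by
      have h0 : emb n s m hsm (restr n s m hsm x) p r = 0 := by
        simp only [emb]
        rw [dif_neg (by tauto)]
        exact if_neg (fun (hc : p = r) => hr (hc ▸ hp))
      rw [h0, zero_mul])]
    have hterm : ∀ j : Fin m,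
        emb n s m hsm (restr n s m hsm x) p ⟨s + j.1, by have := j.isLt; omega⟩ *
          Matrix.of (fun p q => if blockStart n J p = s then (if p = q then 1 else 0) else x p q)
            ⟨s + j.1, by have := j.isLt; omega⟩ q
        = x p ⟨s + j.1, by have := j.isLt; omega⟩ *
            (if (⟨s + j.1, by have := j.isLt; omega⟩ : Fin n) = q then 1 else 0) := by
      intro j
      have hj := j.isLt
      congr 1
      · simp only [emb]
        rw [dif_pos ⟨hp.1, hp.2, by (try simp only [Fin.val_mk]); omega,
          by (try simp only [Fin.val_mk]); omega⟩]
        simp only [restr, Matrix.submatrix_apply]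
        congr 1 <;> exact Fin.ext (by (try simp only [Fin.val_mk]); omega)
      · simp only [Matrix.of_apply]
        rw [if_pos ((hchar _).mpr ⟨by (try simp only [Fin.val_mk]); omega,
          by (try simp only [Fin.val_mk]); omega⟩)]
    rw [Finset.sum_congr rfl (fun j _ => hterm j)]
    by_cases hq : s ≤ q.1 ∧ q.1 < s + m
    · rw [Finset.sum_eq_single (⟨q.1 - s, by omega⟩ : Fin m)]
      · rw [if_pos (Fin.ext (by (try simp only [Fin.val_mk]); omega)), mul_one]
        congr 1
        exact Fin.ext (by (try simp only [Fin.val_mk]); omega)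
      · intro j _ hj
        rw [if_neg (fun hc => hj (Fin.ext (by
          have := congrArg Fin.val hc
          simp only [Fin.val_mk] at this ⊢
          omega))), mul_zero]
      · intro hc
        exact absurd (Finset.mem_univ _) hc
    · have hne : blockStart n J p ≠ blockStart n J q := by
        rw [(hchar p).mpr hp]
        exact fun hc => hq ((hchar q).mp hc.symm)
      rw [hblk p q hne]
      symm
      apply Finset.sum_eq_zero
      intro j _
      rw [if_neg (fun hc => hq (by rw [← hc]; exact ⟨by (try simp only [Fin.val_mk]); omega,
        by simp only [Fin.val_mk]; have := j.isLt; omega⟩)), mul_zero]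
  · have hemb : ∀ r : Fin n, emb n s m hsm (restr n s m hsm x) p r
        = if p = r then 1 else 0 := fun r => by
      simp only [emb]
      rw [dif_neg (by tauto)]
    rw [Finset.sum_eq_single p]
    · rw [hemb p, if_pos rfl, one_mul]
      simp only [Matrix.of_apply]
      rw [if_neg (fun hc => hp ((hchar p).mp hc))]
    · intro r _ hr
      rw [hemb r, if_neg (Ne.symm hr), zero_mul]
    · intro hc
      exact absurd (Finset.mem_univ _) hc

lemma aux_mem (n : ℕ) (J : Set (Fin (n-1))) :
    ∀ k t : ℕ, n ≤ t + k → ∀ x : Matrix (Fin n) (Fin n) ℂ,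
      (∀ p q : Fin n, blockStart n J p ≠ blockStart n J q → x p q = 0) →
      (∀ p : Fin n,
        restr n (blockStart n J p) (blockEnd n J p - blockStart n J p + 1) (hsm_pf n J p) x
          ∈ UnegMonoid (blockEnd n J p - blockStart n J p + 1)) →
      (∀ p q : Fin n, p.1 < t → x p q = if p = q then 1 else 0) →
      x ∈ UnegMonoid n := by
  intro k
  induction k with
  | zero =>
    intro t ht x _ _ hid
    have hx : x = 1 := by
      funext p q
      rw [hid p q (by have := p.isLt; omega), Matrix.one_apply]
    rw [hx]; exact one_mem _
  | succ k ih =>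
    intro t ht x hblk hblocks hid
    by_cases htn : n ≤ t
    · have hx : x = 1 := by
        funext p q
        rw [hid p q (by have := p.isLt; omega), Matrix.one_apply]
      rw [hx]; exact one_mem _
    · push_neg at htn
      have hse : blockStart n J ⟨t, htn⟩ ≤ t := blockStart_le n J ⟨t, htn⟩
      have hte : t ≤ blockEnd n J ⟨t, htn⟩ := le_blockEnd n J ⟨t, htn⟩
      have hen : blockEnd n J ⟨t, htn⟩ < n := blockEnd_lt n J ⟨t, htn⟩
      have hchar : ∀ q : Fin n, blockStart n J q = blockStart n J ⟨t, htn⟩ ↔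
          (blockStart n J ⟨t, htn⟩ ≤ q.1 ∧ q.1 < blockStart n J ⟨t, htn⟩ +
            (blockEnd n J ⟨t, htn⟩ - blockStart n J ⟨t, htn⟩ + 1)) := by
        intro q
        rw [mem_block_iff n J ⟨t, htn⟩ q]
        constructor
        · rintro ⟨h1, h2⟩; exact ⟨h1, by omega⟩
        · rintro ⟨h1, h2⟩; exact ⟨h1, by omega⟩
      have hstep := block_step n J (blockStart n J ⟨t, htn⟩)
        (blockEnd n J ⟨t, htn⟩ - blockStart n J ⟨t, htn⟩ + 1) (hsm_pf n J ⟨t, htn⟩)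
        x hchar hblk
      have hx'blk : ∀ p q : Fin n, blockStart n J p ≠ blockStart n J q →
          Matrix.of (fun p q => if blockStart n J p = blockStart n J ⟨t, htn⟩
            then (if p = q then 1 else 0) else x p q) p q = 0 := by
        intro p q hpq
        simp only [Matrix.of_apply]
        by_cases hps : blockStart n J p = blockStart n J ⟨t, htn⟩
        · rw [if_pos hps, if_neg (fun hc => hpq (by rw [hc]))]
        · rw [if_neg hps]; exact hblk p q hpq
      have hx'blocks : ∀ p : Fin n,
          restr n (blockStart n J p) (blockEnd n J p - blockStart n J p + 1) (hsm_pf n J p)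
            (Matrix.of (fun p q => if blockStart n J p = blockStart n J ⟨t, htn⟩
              then (if p = q then 1 else 0) else x p q))
            ∈ UnegMonoid (blockEnd n J p - blockStart n J p + 1) := by
        intro p
        by_cases hps : blockStart n J p = blockStart n J ⟨t, htn⟩
        · have hpe : blockEnd n J p = blockEnd n J ⟨t, htn⟩ :=
            blockEnd_eq_of_start_eq n J p ⟨t, htn⟩ hps
          have hone := restr_eq_one_of n (blockStart n J p)
            (blockEnd n J p - blockStart n J p + 1) (hsm_pf n J p)
            (Matrix.of (fun p q => if blockStart n J p = blockStart n J ⟨t, htn⟩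
              then (if p = q then 1 else 0) else x p q))
            (by
              intro a b ha1 ha2 _ _
              simp only [Matrix.of_apply]
              have hsep := blockStart_le n J p
              have hsee := le_blockEnd n J p
              rw [if_pos ((hchar a).mpr ⟨by omega, by omega⟩)])
          rw [hone]; exact one_mem _
        · have heqr := restr_congr n (blockStart n J p)
            (blockEnd n J p - blockStart n J p + 1) (hsm_pf n J p)
            (Matrix.of (fun p q => if blockStart n J p = blockStart n J ⟨t, htn⟩
              then (if p = q then 1 else 0) else x p q)) x
            (by
              intro a b ha1 ha2 _ _
              simp only [Matrix.of_apply]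
              have hsep := blockStart_le n J p
              have hsee := le_blockEnd n J p
              have hap : blockStart n J a = blockStart n J p :=
                (mem_block_iff n J p a).mpr ⟨ha1, by omega⟩
              rw [if_neg (fun hc => hps (by rw [← hap]; exact hc))])
          rw [heqr]; exact hblocks p
      have hx'id : ∀ p q : Fin n, p.1 < blockEnd n J ⟨t, htn⟩ + 1 →
          Matrix.of (fun p q => if blockStart n J p = blockStart n J ⟨t, htn⟩
            then (if p = q then 1 else 0) else x p q) p q = if p = q then 1 else 0 := by
        intro p q hple
        simp only [Matrix.of_apply]
        by_cases hps : blockStart n J p = blockStart n J ⟨t, htn⟩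
        · rw [if_pos hps]
        · rw [if_neg hps]
          apply hid
          have h2 : ¬(blockStart n J ⟨t, htn⟩ ≤ p.1 ∧ p.1 < blockStart n J ⟨t, htn⟩ +
              (blockEnd n J ⟨t, htn⟩ - blockStart n J ⟨t, htn⟩ + 1)) :=
            fun hc => hps ((hchar p).mpr hc)
          omega
      have hx'mem := ih (blockEnd n J ⟨t, htn⟩ + 1) (by omega) _ hx'blk hx'blocks hx'id
      rw [hstep]
      exact mul_mem (emb_mem n (blockStart n J ⟨t, htn⟩)
        (blockEnd n J ⟨t, htn⟩ - blockStart n J ⟨t, htn⟩ + 1) (hsm_pf n J ⟨t, htn⟩)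
        _ (hblocks ⟨t, htn⟩)) hx'mem

/-- Lemma: a `J`-block diagonal lower triangular `x ∈ SL_n(ℂ)` with `1`'s on the
diagonal lies in `U⁻_{≥0}` iff each of its diagonal blocks lies in the
corresponding nonnegative submonoid of `SL_{n_k}(ℂ)`. -/
theorem block_diagonal_nonneg_iff (n : ℕ) (hn : 2 ≤ n) (J : Set (Fin (n-1)))
    (x : Matrix (Fin n) (Fin n) ℂ) (hdet : x.det = 1)
    (hlow : lowerTri n x) (hdiag : ∀ i, x i i = 1)
    (hblk : ∀ p q : Fin n, blockStart n J p ≠ blockStart n J q → x p q = 0) :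
    x ∈ UnegMonoid n ↔
      ∀ p : Fin n,
        (x.submatrix
          (fun k : Fin (blockEnd n J p - blockStart n J p + 1) =>
            (⟨blockStart n J p + k.1, by
              have h0 := k.isLt
              have h1 := blockStart_le n J p
              have h2 := le_blockEnd n J p
              have h3 := blockEnd_lt n J p
              omega⟩ : Fin n))
          (fun k : Fin (blockEnd n J p - blockStart n J p + 1) =>
            (⟨blockStart n J p + k.1, by
              have h0 := k.isLt
              have h1 := blockStart_le n J p
              have h2 := le_blockEnd n J p
              have h3 := blockEnd_lt n J p
              omega⟩ : Fin n)))
          ∈ UnegMonoid (blockEnd n J p - blockStart n J p + 1) := by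
  constructor
  · intro hx p
    exact (restr_mem n (blockStart n J p) (blockEnd n J p - blockStart n J p + 1)
      (hsm_pf n J p) x hx).2
  · intro hall
    exact aux_mem n J n 0 (by omega) x hblk (fun p => hall p)
      (fun p q hp => absurd hp (Nat.not_lt_zero _))

end PetersonPaper
end
end
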